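/- Let Q*₁,…,Q*_k be probability measures on (𝒳,𝒜), let β*, α ∈ 𝒲_k with αᵢ > 0 for all i, set P* = ∑ᵢ β*ᵢ Q*ᵢ and P_α = ∑ᵢ αᵢ Q*ᵢ, and let Π*_α be the distribution on 𝒳 × [k] of (X,Y) with ℙ(Y=i) = αᵢ and law of X given Y=i equal to Q*ᵢ. Suppose the predictor f : 𝒳 → 𝒲_k is canonically calibrated with respect to Π*_α, i.e. fᵢ(X) = 𝔼[1_{Y=i} | f(X)] a.s. for all i ∈ [k]. Let R_{β*} be the probability measure with density ∑ᵢ β*ᵢ αᵢ^{−1} fᵢ with respect to P_α. Then for every bounded measurable function φ : 𝒲_k → ℝ, 𝔼_{X∼P*}[φ(f(X))] = 𝔼_{X∼R_{β*}}[φ(f(X))]. -/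

import Mathlib

open MeasureTheory Real
open scoped ENNReal

noncomputable section

variable {𝒳 : Type*} [MeasurableSpace 𝒳]

/-- Squared Hellinger distance between two measures. -/
def hellingerSq (P Q : Measure 𝒳) : ℝ :=
  (1 / 2) * ∫ x, (Real.sqrt ((P.rnDeriv (P + Q) x).toReal)
      - Real.sqrt ((Q.rnDeriv (P + Q) x).toReal)) ^ 2 ∂(P + Q)

/-- Hellinger distance between two measures. -/
def hellinger (P Q : Measure 𝒳) : ℝ := Real.sqrt (hellingerSq P Q)

/-- Hellinger distance between two weight vectors. -/
def hellingerVec {k : ℕ} (w w' : Fin k → ℝ) : ℝ :=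
  Real.sqrt ((1 / 2) * ∑ i, (Real.sqrt (w i) - Real.sqrt (w' i)) ^ 2)

/-- Total variation distance. -/
def tvDist (P Q : Measure 𝒳) : ℝ :=
  ⨆ s : { s : Set 𝒳 // MeasurableSet s }, |(P s.1).toReal - (Q s.1).toReal|

/-- Mixture of measures with real weights. -/
def mix {k : ℕ} (β : Fin k → ℝ) (Q : Fin k → Measure 𝒳) : Measure 𝒳 :=
  ∑ i, ENNReal.ofReal (β i) • Q i

/-- Linear independence of finite measures, viewed in the real vector space of
finite signed measures: the only real linear combination vanishing on every
measurable set is the trivial one. -/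
def MeasLinIndep {k : ℕ} (F : Fin k → Measure 𝒳) : Prop :=
  ∀ c : Fin k → ℝ, (∀ s : Set 𝒳, MeasurableSet s → ∑ i, c i * (F i s).toReal = 0) → c = 0

/-- The constant Δ*(F₁,…,F_k). -/
def Δstar {k : ℕ} (F : Fin k → Measure 𝒳) : ℝ :=
  ⨅ I : { I : Finset (Fin k) // I.Nonempty ∧ I ≠ Finset.univ },
    ⨅ γ : { γ : Fin k → ℝ // (∀ i, 0 ≤ γ i) ∧ ∑ i ∈ I.1, γ i = 1 },
      ⨅ l : { l : Fin k → ℝ // (∀ i, 0 ≤ l i) ∧ ∑ i ∈ I.1ᶜ, l i = 1 },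
        tvDist (∑ i ∈ I.1, ENNReal.ofReal (γ.1 i) • F i)
          (∑ i ∈ I.1ᶜ, ENNReal.ofReal (l.1 i) • F i)

/-- ψ(√r) where ψ(x) = (x−1)/(x+1), with ψ(√∞) = 1. -/
def ψρ (r : ℝ≥0∞) : ℝ :=
  if r = ⊤ then 1 else (Real.sqrt r.toReal - 1) / (Real.sqrt r.toReal + 1)

/-- Ratio b/a in [0,∞] with conventions 0/0 = 1 and a/0 = ∞ for a > 0. -/
def densRatio (a b : ℝ) : ℝ≥0∞ :=
  if a = 0 ∧ b = 0 then 1 else ENNReal.ofReal b / ENNReal.ofReal a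

/-- The statistic T(x,q,q') = ∑ᵢ ψ(√(q'(xᵢ)/q(xᵢ))). -/
def Tρ {n : ℕ} (x : Fin n → 𝒳) (q q' : 𝒳 → ℝ) : ℝ :=
  ∑ i, ψρ (densRatio (q (x i)) (q' (x i)))

/-- The rational points of the simplex, 𝒲_k ∩ ℚ^k. -/
def ratSimplex (k : ℕ) : Set (Fin k → ℝ) :=
  { β | β ∈ stdSimplex ℝ (Fin k) ∧ ∀ i, ∃ r : ℚ, β i = (r : ℝ) }

/-- Mixture density ∑ⱼ βⱼ qⱼ. -/
def mixDens {k : ℕ} (q : Fin k → 𝒳 → ℝ) (β : Fin k → ℝ) : 𝒳 → ℝ :=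
  fun x => ∑ j, β j * q j x

/-- Υ(x,p) = sup over the model ℳ_mix(q₁,…,q_k) of T(x,p,·). -/
def Υρ {n k : ℕ} (q : Fin k → 𝒳 → ℝ) (x : Fin n → 𝒳) (p : 𝒳 → ℝ) : ℝ :=
  ⨆ β : ratSimplex k, Tρ x p (mixDens q β.1)

/-- The set 𝓔(x) of candidate ρ-estimators on the model ℳ_mix(q₁,…,q_k). -/
def rhoEstSet {n k : ℕ} (μ : Measure 𝒳) (q : Fin k → 𝒳 → ℝ) (x : Fin n → 𝒳) :
    Set (Measure 𝒳) :=
  { P | ∃ β ∈ ratSimplex k,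
      P = μ.withDensity (fun y => ENNReal.ofReal (mixDens q β y)) ∧
      Υρ q x (mixDens q β) < (⨅ β' : ratSimplex k, Υρ q x (mixDens q β'.1)) + 11.36 }

/-- Closure of a set of measures with respect to the Hellinger distance. -/
def hellClosure (S : Set (Measure 𝒳)) : Set (Measure 𝒳) :=
  { P | ∀ ε > 0, ∃ Q ∈ S, hellinger P Q < ε }

/-- The Bayes predictor associated with weights α and densities q. -/
def bayesPred {k : ℕ} (α : Fin k → ℝ) (q : Fin k → 𝒳 → ℝ) : 𝒳 → Fin k → ℝ :=
  fun x i => α i * q i x / ∑ j, α j * q j x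

/-- The joint distribution Π*_α on 𝒳 × [k] with ℙ(Y = i) = αᵢ and law of X given
Y = i equal to Q i. -/
def jointLaw {k : ℕ} (α : Fin k → ℝ) (Q : Fin k → Measure 𝒳) : Measure (𝒳 × Fin k) :=
  ∑ i, ENNReal.ofReal (α i) • ((Q i).prod (Measure.dirac i))

/-- Marginal calibration: fᵢ(X) = 𝔼[1_{Y=i} | fᵢ(X)] a.s. for all i. -/
def MarginallyCalibrated {k : ℕ} (f : 𝒳 → Fin k → ℝ) (Pm : Measure (𝒳 × Fin k)) : Prop :=
  ∀ i, (fun ω : 𝒳 × Fin k => f ω.1 i)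
    =ᵐ[Pm] Pm[(fun ω : 𝒳 × Fin k => if ω.2 = i then (1 : ℝ) else 0) |
        MeasurableSpace.comap (fun ω : 𝒳 × Fin k => f ω.1 i) inferInstance]

/-- Canonical calibration: fᵢ(X) = 𝔼[1_{Y=i} | f(X)] a.s. for all i. -/
def CanonicallyCalibrated {k : ℕ} (f : 𝒳 → Fin k → ℝ) (Pm : Measure (𝒳 × Fin k)) : Prop :=
  ∀ i, (fun ω : 𝒳 × Fin k => f ω.1 i)
    =ᵐ[Pm] Pm[(fun ω : 𝒳 × Fin k => if ω.2 = i then (1 : ℝ) else 0) |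
        MeasurableSpace.comap (fun ω : 𝒳 × Fin k => f ω.1) inferInstance]

open scoped Classical in
/-- Kullback–Leibler divergence. -/
def klDiv' (P Q : Measure 𝒳) : EReal :=
  if P ≪ Q ∧ Integrable (fun x => Real.log ((P.rnDeriv Q x).toReal)) P
  then ((∫ x, Real.log ((P.rnDeriv Q x).toReal) ∂P : ℝ) : EReal)
  else ⊤

end

section

variable {𝒳 : Type*} [MeasurableSpace 𝒳]

private lemma integrable_of_bdd' {Y : Type*} [MeasurableSpace Y] {μ : Measure Y}
    [IsFiniteMeasure μ] {g : Y → ℝ} (hg : AEStronglyMeasurable g μ) {C : ℝ}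
    (h : ∀ y, |g y| ≤ C) : Integrable g μ :=
  (integrable_const C).mono' hg (ae_of_all _ fun y => by simpa [Real.norm_eq_abs] using h y)

private lemma isFiniteMeasure_ofReal_smul' {Y : Type*} [MeasurableSpace Y] (c : ℝ)
    (μ : Measure Y) [IsFiniteMeasure μ] : IsFiniteMeasure (ENNReal.ofReal c • μ) := by
  constructor
  rw [Measure.smul_apply, smul_eq_mul]
  exact ENNReal.mul_lt_top ENNReal.ofReal_lt_top (measure_lt_top μ _)

private lemma integral_sum_smul' {Y : Type*} [MeasurableSpace Y] {k : ℕ}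
    (β : Fin k → ℝ) (hβ : ∀ i, 0 ≤ β i) (μ : Fin k → Measure Y)
    [∀ i, IsFiniteMeasure (μ i)] {g : Y → ℝ} (hg : Measurable g) {C : ℝ}
    (hC : ∀ y, |g y| ≤ C) :
    ∫ y, g y ∂(∑ i, ENNReal.ofReal (β i) • μ i) = ∑ i, β i * ∫ y, g y ∂(μ i) := by
  have hint : ∀ i ∈ Finset.univ, Integrable g (ENNReal.ofReal (β i) • μ i) := fun i _ => by
    haveI := isFiniteMeasure_ofReal_smul' (β i) (μ i)
    exact integrable_of_bdd' hg.aestronglyMeasurable hC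
  rw [integral_finset_sum_measure hint]
  exact Finset.sum_congr rfl fun i _ => by
    rw [integral_smul_measure, ENNReal.toReal_ofReal (hβ i), smul_eq_mul]

private lemma integral_jointLaw' {Y : Type*} [MeasurableSpace Y] {k : ℕ}
    (α : Fin k → ℝ) (hα : ∀ i, 0 ≤ α i) (Q : Fin k → Measure Y)
    [∀ i, IsProbabilityMeasure (Q i)] {G : Y × Fin k → ℝ} (hG : Measurable G) {C : ℝ}
    (hC : ∀ ω, |G ω| ≤ C) :
    ∫ ω, G ω ∂(jointLaw α Q) = ∑ i, α i * ∫ y, G (y, i) ∂(Q i) := by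
  rw [jointLaw]
  have hint : ∀ i ∈ Finset.univ,
      Integrable G (ENNReal.ofReal (α i) • (Q i).prod (Measure.dirac i)) := fun i _ => by
    haveI := isFiniteMeasure_ofReal_smul' (α i) ((Q i).prod (Measure.dirac i))
    exact integrable_of_bdd' hG.aestronglyMeasurable hC
  rw [integral_finset_sum_measure hint]
  refine Finset.sum_congr rfl fun i _ => ?_
  rw [integral_smul_measure, ENNReal.toReal_ofReal (hα i), smul_eq_mul,
    Measure.prod_dirac, integral_map measurable_prodMk_right.aemeasurable
      hG.aestronglyMeasurable]

-- STATEMENT 19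
theorem statement19 {k : ℕ} (hk : 2 ≤ k)
    (Qstar : Fin k → Measure 𝒳) [∀ i, IsProbabilityMeasure (Qstar i)]
    (βstar α : Fin k → ℝ) (hβstar : βstar ∈ stdSimplex ℝ (Fin k))
    (hα : α ∈ stdSimplex ℝ (Fin k)) (hαpos : ∀ i, 0 < α i)
    (f : 𝒳 → Fin k → ℝ) (hf_meas : Measurable f) (hf : ∀ x, f x ∈ stdSimplex ℝ (Fin k))
    (hcal : CanonicallyCalibrated f (jointLaw α Qstar))
    (φ : (Fin k → ℝ) → ℝ) (hφ_meas : Measurable φ) (hφ_bdd : ∃ Cb : ℝ, ∀ v, |φ v| ≤ Cb) :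
    ∫ x, φ (f x) ∂(mix βstar Qstar)
      = ∫ x, φ (f x)
          ∂((mix α Qstar).withDensity fun x =>
              ENNReal.ofReal (∑ i, βstar i / α i * f x i)) := by
  classical
  obtain ⟨Cb, hCb⟩ := hφ_bdd
  have hCb0 : 0 ≤ Cb := le_trans (abs_nonneg _) (hCb 0)
  have hf0 : ∀ x i, 0 ≤ f x i := fun x i => (hf x).1 i
  have hf1 : ∀ x i, f x i ≤ 1 := fun x i => by
    calc f x i ≤ ∑ j, f x j :=
          Finset.single_le_sum (fun j _ => (hf x).1 j) (Finset.mem_univ i)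
    _ = 1 := (hf x).2
  have hα0 : ∀ i, 0 ≤ α i := fun i => (hαpos i).le
  have hfi_meas : ∀ i, Measurable fun x => f x i := fun i =>
    (measurable_pi_apply i).comp hf_meas
  have hφf_meas : Measurable fun x => φ (f x) := hφ_meas.comp hf_meas
  set Pm := jointLaw α Qstar with hPmdef
  haveI : IsFiniteMeasure Pm := by
    constructor
    rw [hPmdef, jointLaw, Measure.finset_sum_apply]
    refine ENNReal.sum_lt_top.2 fun i _ => ?_
    rw [Measure.smul_apply, smul_eq_mul]
    exact ENNReal.mul_lt_top ENNReal.ofReal_lt_top (measure_lt_top _ _)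
  have hm : MeasurableSpace.comap (fun ω : 𝒳 × Fin k => f ω.1) inferInstance
      ≤ Prod.instMeasurableSpace := (hf_meas.comp measurable_fst).comap_le
  have hmix : mix α Qstar = ∑ i, ENNReal.ofReal (α i) • Qstar i := rfl
  have hmixβ : mix βstar Qstar = ∑ i, ENNReal.ofReal (βstar i) • Qstar i := rfl
  -- key calibration identity
  have key : ∀ i, ∫ x, f x i * φ (f x) ∂(mix α Qstar) = α i * ∫ x, φ (f x) ∂(Qstar i) := by
    intro i
    have hGmeas : Measurable fun ω : 𝒳 × Fin k => f ω.1 i * φ (f ω.1) :=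
      ((hfi_meas i).comp measurable_fst).mul (hφf_meas.comp measurable_fst)
    have hgbdd : ∀ x : 𝒳, |f x i * φ (f x)| ≤ Cb := fun x => by
      rw [abs_mul]
      calc |f x i| * |φ (f x)| ≤ 1 * Cb :=
            mul_le_mul (abs_le.2 ⟨by linarith [hf0 x i], hf1 x i⟩) (hCb _)
              (abs_nonneg _) zero_le_one
      _ = Cb := one_mul _
    -- indicator of {Y = i}
    set ind : 𝒳 × Fin k → ℝ := fun ω => if ω.2 = i then (1 : ℝ) else 0 with hinddef
    have hind_meas : Measurable ind :=
      Measurable.ite ((measurableSet_singleton i).preimage measurable_snd)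
        measurable_const measurable_const
    have hind_bdd : ∀ ω, |ind ω| ≤ (1 : ℝ) := fun ω => by
      by_cases h : ω.2 = i <;> simp [hinddef, h]
    have hind_int : Integrable ind Pm :=
      integrable_of_bdd' hind_meas.aestronglyMeasurable hind_bdd
    set φF : 𝒳 × Fin k → ℝ := fun ω => φ (f ω.1) with hφFdef
    have hφF_meas : Measurable φF := hφf_meas.comp measurable_fst
    have hφF_sm : StronglyMeasurable[MeasurableSpace.comap (fun ω : 𝒳 × Fin k => f ω.1) inferInstance] φF :=
      (hφ_meas.comp (comap_measurable (fun ω : 𝒳 × Fin k => f ω.1))).stronglyMeasurable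
    have hmul_bdd : ∀ ω, |(φF * ind) ω| ≤ Cb := fun ω => by
      rw [Pi.mul_apply, abs_mul]
      calc |φF ω| * |ind ω| ≤ Cb * 1 :=
            mul_le_mul (hCb _) (hind_bdd ω) (abs_nonneg _) hCb0
      _ = Cb := mul_one _
    have hmul_int : Integrable (φF * ind) Pm :=
      integrable_of_bdd' (hφF_meas.mul hind_meas).aestronglyMeasurable hmul_bdd
    have hpull : Pm[φF * ind | MeasurableSpace.comap (fun ω : 𝒳 × Fin k => f ω.1) inferInstance] =ᵐ[Pm] φF * Pm[ind | MeasurableSpace.comap (fun ω : 𝒳 × Fin k => f ω.1) inferInstance] :=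
      condExp_mul_of_stronglyMeasurable_left hφF_sm hmul_int hind_int
    have hcali : (fun ω : 𝒳 × Fin k => f ω.1 i) =ᵐ[Pm] Pm[ind | MeasurableSpace.comap (fun ω : 𝒳 × Fin k => f ω.1) inferInstance] := hcal i
    -- ∫ fᵢ φf over mix α = ∫ over Pm
    have h1 : ∫ x, f x i * φ (f x) ∂(mix α Qstar)
        = ∫ ω, f ω.1 i * φ (f ω.1) ∂Pm := by
      rw [hmix, integral_sum_smul' (g := fun x => f x i * φ (f x)) α hα0 Qstar (hfi_meas i |>.mul hφf_meas) hgbdd,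
        hPmdef, integral_jointLaw' α hα0 Qstar hGmeas (fun ω => hgbdd ω.1)]
    have h2 : ∫ ω, f ω.1 i * φ (f ω.1) ∂Pm = ∫ ω, (φF * Pm[ind | MeasurableSpace.comap (fun ω : 𝒳 × Fin k => f ω.1) inferInstance]) ω ∂Pm :=
      integral_congr_ae (hcali.mono fun ω hω => by
        simp only [Pi.mul_apply]; rw [← hω]; exact mul_comm _ _)
    have h3 : ∫ ω, (φF * Pm[ind | MeasurableSpace.comap (fun ω : 𝒳 × Fin k => f ω.1) inferInstance]) ω ∂Pm = ∫ ω, (Pm[φF * ind | MeasurableSpace.comap (fun ω : 𝒳 × Fin k => f ω.1) inferInstance]) ω ∂Pm :=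
      (integral_congr_ae hpull).symm
    have h4 : ∫ ω, (Pm[φF * ind | MeasurableSpace.comap (fun ω : 𝒳 × Fin k => f ω.1) inferInstance]) ω ∂Pm = ∫ ω, (φF * ind) ω ∂Pm :=
      integral_condExp hm
    have h5 : ∫ ω, (φF * ind) ω ∂Pm
        = ∑ j, α j * ∫ y, φ (f y) * (if j = i then (1 : ℝ) else 0) ∂(Qstar j) := by
      rw [hPmdef]
      exact integral_jointLaw' α hα0 Qstar (hφF_meas.mul hind_meas) hmul_bdd
    have h6 : ∀ j, α j * ∫ y, φ (f y) * (if j = i then (1 : ℝ) else 0) ∂(Qstar j)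
        = if j = i then α i * ∫ y, φ (f y) ∂(Qstar i) else 0 := by
      intro j; by_cases hj : j = i <;> simp [hj]
    rw [h1, h2, h3, h4, h5, Finset.sum_congr rfl fun j _ => h6 j,
      Finset.sum_ite_eq' Finset.univ i fun _ => α i * ∫ y, φ (f y) ∂(Qstar i),
      if_pos (Finset.mem_univ i)]
  -- rewrite RHS via the density
  have hd_meas : Measurable fun x => ∑ i, βstar i / α i * f x i :=
    Finset.measurable_sum _ fun i _ => measurable_const.mul (hfi_meas i)
  have hd0 : ∀ x, 0 ≤ ∑ i, βstar i / α i * f x i := fun x =>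
    Finset.sum_nonneg fun i _ =>
      mul_nonneg (div_nonneg (hβstar.1 i) (hα0 i)) (hf0 x i)
  have hrhs : ∫ x, φ (f x)
        ∂((mix α Qstar).withDensity fun x =>
            ENNReal.ofReal (∑ i, βstar i / α i * f x i))
      = ∫ x, (∑ i, βstar i / α i * f x i) * φ (f x) ∂(mix α Qstar) := by
    have : (fun x => ENNReal.ofReal (∑ i, βstar i / α i * f x i)) =
        fun x => (((∑ i, βstar i / α i * f x i).toNNReal : NNReal) : ℝ≥0∞) := rfl
    rw [this, integral_withDensity_eq_integral_smul hd_meas.real_toNNReal]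
    refine integral_congr_ae (ae_of_all _ fun x => ?_)
    show (∑ i, βstar i / α i * f x i).toNNReal • φ (f x) = _
    rw [NNReal.smul_def, smul_eq_mul, Real.coe_toNNReal _ (hd0 x)]
  haveI : IsFiniteMeasure (mix α Qstar) := by
    constructor
    rw [hmix, Measure.finset_sum_apply]
    refine ENNReal.sum_lt_top.2 fun i _ => ?_
    rw [Measure.smul_apply, smul_eq_mul]
    exact ENNReal.mul_lt_top ENNReal.ofReal_lt_top (measure_lt_top _ _)
  have hterm_bdd : ∀ i (x : 𝒳), |f x i * φ (f x)| ≤ Cb := fun i x => by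
    rw [abs_mul]
    calc |f x i| * |φ (f x)| ≤ 1 * Cb :=
          mul_le_mul (abs_le.2 ⟨by linarith [hf0 x i], hf1 x i⟩) (hCb _)
            (abs_nonneg _) zero_le_one
    _ = Cb := one_mul _
  have hsum : ∫ x, (∑ i, βstar i / α i * f x i) * φ (f x) ∂(mix α Qstar)
      = ∑ i, βstar i / α i * ∫ x, f x i * φ (f x) ∂(mix α Qstar) := by
    have hint : ∀ i ∈ Finset.univ,
        Integrable (fun x => βstar i / α i * (f x i * φ (f x))) (mix α Qstar) := by
      intro i _
      exact (integrable_of_bdd' ((hfi_meas i).mul hφf_meas).aestronglyMeasurable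
        (hterm_bdd i)).const_mul _
    calc ∫ x, (∑ i, βstar i / α i * f x i) * φ (f x) ∂(mix α Qstar)
        = ∫ x, ∑ i, βstar i / α i * (f x i * φ (f x)) ∂(mix α Qstar) := by
          refine integral_congr_ae (ae_of_all _ fun x => ?_)
          show (∑ i, βstar i / α i * f x i) * φ (f x) = _
          rw [Finset.sum_mul]
          exact Finset.sum_congr rfl fun i _ => mul_assoc _ _ _
      _ = ∑ i, ∫ x, βstar i / α i * (f x i * φ (f x)) ∂(mix α Qstar) :=
          integral_finset_sum _ hint
      _ = ∑ i, βstar i / α i * ∫ x, f x i * φ (f x) ∂(mix α Qstar) :=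
          Finset.sum_congr rfl fun i _ => integral_const_mul _ _
  have hlhs : ∫ x, φ (f x) ∂(mix βstar Qstar) = ∑ i, βstar i * ∫ x, φ (f x) ∂(Qstar i) := by
    rw [hmixβ]
    exact integral_sum_smul' βstar hβstar.1 Qstar hφf_meas (fun x => hCb _)
  rw [hlhs, hrhs, hsum]
  refine Finset.sum_congr rfl fun i _ => ?_
  rw [key i, ← mul_assoc, div_mul_cancel₀ _ (hαpos i).ne']

end
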